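/- Let ρ be a density matrix and σ an invertible density matrix with v distinct eigenvalues, and let E_σ be the pinching map with respect to σ. Then D(ρ‖σ) ≤ D(E_σ(ρ)‖σ) + log v, where D is the quantum relative entropy. -/

import Mathlib

open Matrix
open scoped ComplexOrder Kronecker

noncomputable def mpow {n : Type*} [Fintype n] [DecidableEq n]
    (A : Matrix n n ℂ) (s : ℝ) : Matrix n n ℂ :=
  cfc (fun x : ℝ => x ^ s) A

noncomputable def mlog {n : Type*} [Fintype n] [DecidableEq n]
    (A : Matrix n n ℂ) : Matrix n n ℂ :=
  cfc Real.log A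


set_option maxHeartbeats 1000000

section Helpers

variable {n : Type*} [Fintype n] [DecidableEq n] {W U : Matrix n n ℂ}


lemma trace_formula (U W : Matrix n n ℂ) (hU : star U * U = 1) (hW : W * star W = 1)
    (f g : n → ℝ) :
    trace ((U * diagonal (fun k => (f k : ℂ)) * star U) *
           (W * diagonal (fun j => (g j : ℂ)) * star W))
      = ((∑ k, ∑ j, f k * g j * Complex.normSq ((star U * W) k j) : ℝ) : ℂ) := by
  have hU' : U * star U = 1 := mul_eq_one_comm.mp hU
  set V := star U * W with hV
  have hsV : star V = star W * U := by rw [hV, StarMul.star_mul, star_star]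
  have hWU : star W = star V * star U := by
    rw [hsV, Matrix.mul_assoc, hU', Matrix.mul_one]
  have h1 : (U * diagonal (fun k => (f k : ℂ)) * star U) *
           (W * diagonal (fun j => (g j : ℂ)) * star W)
      = U * (diagonal (fun k => (f k : ℂ)) * V * diagonal (fun j => (g j : ℂ)) * star V) * star U := by
    rw [hWU, hV]
    noncomm_ring
  rw [h1, Matrix.trace_mul_cycle, ← Matrix.mul_assoc, hU, Matrix.one_mul]
  have h2 : ∀ k, (diagonal (fun k => (f k : ℂ)) * V * diagonal (fun j => (g j : ℂ)) * star V) k k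
      = ∑ j, ((f k * g j * Complex.normSq (V k j) : ℝ) : ℂ) := by
    intro k
    rw [Matrix.mul_apply]
    refine Finset.sum_congr rfl fun j _ => ?_
    simp only [Matrix.mul_diagonal, Matrix.diagonal_mul, Matrix.star_apply]
    push_cast
    rw [RCLike.star_def, Complex.normSq_eq_conj_mul_self]
    ring
  rw [Matrix.trace]
  push_cast
  refine Finset.sum_congr rfl fun k _ => ?_
  rw [Matrix.diag, h2]
  push_cast
  rfl


lemma commute_cfc {A B : Matrix n n ℂ} (hA : A.IsHermitian) (h : Commute A B) (f : ℝ → ℝ) :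
    Commute (cfc f A) B := by
  set U : Matrix n n ℂ := (hA.eigenvectorUnitary : Matrix n n ℂ) with hUdef
  have hU : star U * U = 1 := Unitary.coe_star_mul_self hA.eigenvectorUnitary
  have hU' : U * star U = 1 := Unitary.coe_mul_star_self hA.eigenvectorUnitary
  set C : Matrix n n ℂ := star U * B * U with hC
  have hBC : B = U * C * star U := by
    rw [hC]
    calc B = (U * star U) * B * (U * star U) := by rw [hU', Matrix.one_mul, Matrix.mul_one]
    _ = U * (star U * B * U) * star U := by noncomm_ring
  have hAD : star U * A * U = diagonal (fun i => ((hA.eigenvalues i : ℝ) : ℂ)) := by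
    have := hA.conjStarAlgAut_star_eigenvectorUnitary
    rw [Unitary.conjStarAlgAut_apply, Unitary.coe_star, star_star] at this
    exact this
  -- C commutes with the diagonal of eigenvalues
  have hCD : C * diagonal (fun i => ((hA.eigenvalues i : ℝ) : ℂ))
      = diagonal (fun i => ((hA.eigenvalues i : ℝ) : ℂ)) * C := by
    rw [← hAD, hC]
    calc star U * B * U * (star U * A * U) = star U * (B * (U * star U) * A) * U := by noncomm_ring
    _ = star U * (A * (U * star U) * B) * U := by rw [hU', Matrix.mul_one, Matrix.mul_one, h.eq]
    _ = star U * A * U * (star U * B * U) := by noncomm_ring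
  -- entrywise: C i j ≠ 0 → eigenvalues equal
  have key : ∀ g : ℝ → ℝ, C * diagonal (fun i => ((g (hA.eigenvalues i) : ℝ) : ℂ))
      = diagonal (fun i => ((g (hA.eigenvalues i) : ℝ) : ℂ)) * C := by
    intro g
    ext i j
    simp only [Matrix.mul_diagonal, Matrix.diagonal_mul]
    rcases eq_or_ne (C i j) 0 with h0 | h0
    · rw [h0]; ring
    · have := congrFun (congrFun hCD i) j
      simp only [Matrix.mul_diagonal, Matrix.diagonal_mul] at this
      have hev : hA.eigenvalues j = hA.eigenvalues i := by
        have h2 : (hA.eigenvalues j : ℂ) = (hA.eigenvalues i : ℂ) :=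
          mul_left_cancel₀ h0 (by rw [this]; ring)
        exact_mod_cast h2
      rw [hev]; ring
  have hcfc : cfc f A = U * diagonal (fun i => ((f (hA.eigenvalues i) : ℝ) : ℂ)) * star U := by
    rw [hA.cfc_eq, Matrix.IsHermitian.cfc]; rfl
  rw [Commute, SemiconjBy, hcfc, hBC]
  calc U * diagonal (fun i => ((f (hA.eigenvalues i) : ℝ) : ℂ)) * star U * (U * C * star U)
      = U * (diagonal (fun i => ((f (hA.eigenvalues i) : ℝ) : ℂ)) * (star U * U) * C) * star U := by
        noncomm_ring
    _ = U * (diagonal (fun i => ((f (hA.eigenvalues i) : ℝ) : ℂ)) * C) * star U := by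
        rw [hU, Matrix.mul_one]
    _ = U * (C * diagonal (fun i => ((f (hA.eigenvalues i) : ℝ) : ℂ))) * star U := by
        rw [key f]
    _ = U * C * star U * (U * diagonal (fun i => ((f (hA.eigenvalues i) : ℝ) : ℂ)) * star U) := by
        rw [show U * C * star U * (U * diagonal (fun i => ((f (hA.eigenvalues i) : ℝ) : ℂ)) * star U)
          = U * (C * ((star U * U) * diagonal (fun i => ((f (hA.eigenvalues i) : ℝ) : ℂ)))) * star U by noncomm_ring,
          hU, Matrix.one_mul]


lemma psd_smul {A : Matrix n n ℂ} (hA : A.PosSemidef) {r : ℝ} (hr : 0 ≤ r) :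
    ((r : ℂ) • A).PosSemidef := by
  constructor
  · unfold Matrix.IsHermitian
    rw [Matrix.conjTranspose_smul, hA.1.eq]
    congr 1
    simp [Complex.conj_ofReal]
  · intro x
    exact (hA.smul (by exact_mod_cast hr : (0:ℂ) ≤ (r:ℂ))).2 x

lemma psd_sum {ι : Type*} (s : Finset ι) (F : ι → Matrix n n ℂ)
    (h : ∀ i ∈ s, (F i).PosSemidef) : (∑ i ∈ s, F i).PosSemidef := by
  classical
  exact Finset.sum_induction F _ (fun a b ha hb => ha.add hb) Matrix.PosSemidef.zero h

lemma psd_trace_nonneg {A : Matrix n n ℂ} (hA : A.PosSemidef) : 0 ≤ (trace A).re := by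
  have h : ∀ i, 0 ≤ A i i := fun i => hA.diag_nonneg
  rw [Matrix.trace, Complex.re_sum]
  exact Finset.sum_nonneg fun i _ => (Complex.le_def.mp (h i)).1

open scoped MatrixOrder in
lemma psd_mul_trace_nonneg {A B : Matrix n n ℂ} (hA : A.PosSemidef) (hB : B.PosSemidef) :
    0 ≤ (trace (A * B)).re := by
  have h1 : A * B = A * (CFC.sqrt B) * (CFC.sqrt B) := by
    rw [Matrix.mul_assoc, CFC.sqrt_mul_sqrt_self B hB.nonneg]
  have h2 : trace (A * B) = trace ((CFC.sqrt B) * A * (CFC.sqrt B)) := by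
    rw [h1, Matrix.trace_mul_cycle, Matrix.mul_assoc]
  have h3 : ((CFC.sqrt B) * A * (CFC.sqrt B)).PosSemidef := by
    have := hA.mul_mul_conjTranspose_same (CFC.sqrt B)
    rwa [(CFC.sqrt_nonneg B).posSemidef.1] at this
  rw [h2]
  exact psd_trace_nonneg h3

noncomputable def conjD {n : Type*} [Fintype n] [DecidableEq n]
    (W : Matrix n n ℂ) (f : n → ℝ) : Matrix n n ℂ :=
  W * diagonal (fun j => (f j : ℂ)) * star W


lemma conjD_mul (hW : star W * W = 1) (f g : n → ℝ) :
    conjD W f * conjD W g = conjD W (fun j => f j * g j) := by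
  unfold conjD
  rw [show W * diagonal (fun k => (f k : ℂ)) * star W * (W * diagonal (fun k => (g k : ℂ)) * star W)
    = W * (diagonal (fun k => (f k : ℂ)) * (star W * W) * diagonal (fun k => (g k : ℂ))) * star W by
      noncomm_ring, hW, Matrix.mul_one, Matrix.diagonal_mul_diagonal]
  congr 2
  funext k
  push_cast
  rfl

lemma conjD_sub (f g : n → ℝ) : conjD W f - conjD W g = conjD W (fun j => f j - g j) := by
  unfold conjD
  rw [← Matrix.sub_mul, ← Matrix.mul_sub, Matrix.diagonal_sub]
  congr 2
  funext j
  push_cast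
  rfl

lemma conjD_smul (r : ℝ) (f : n → ℝ) : (r : ℂ) • conjD W f = conjD W (fun j => r * f j) := by
  unfold conjD
  rw [← Matrix.smul_mul, ← Matrix.mul_smul]
  congr 2
  ext i j
  rcases eq_or_ne i j with h | h <;>
    simp [Matrix.diagonal_apply, h, Matrix.smul_apply]

lemma conjD_one (hW' : W * star W = 1) : conjD W (fun _ => 1) = 1 := by
  unfold conjD
  rw [show (diagonal (fun _ : n => ((1:ℝ):ℂ))) = (1 : Matrix n n ℂ) by
    push_cast; exact Matrix.diagonal_one, Matrix.mul_one, hW']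

lemma conjD_psd (hW' : W * star W = 1) {g : n → ℝ} (hg : ∀ j, 0 ≤ g j) :
    (conjD W g).PosSemidef := by
  have hd : (diagonal (fun j => (g j : ℂ))).PosSemidef := by
    refine Matrix.PosSemidef.diagonal fun j => ?_
    simpa using Complex.zero_le_real.mpr (hg j)
  have := hd.mul_mul_conjTranspose_same W
  rwa [← Matrix.star_eq_conjTranspose] at this

lemma trace_conjD (hU : star U * U = 1) (hW' : W * star W = 1) (f g : n → ℝ) :
    (trace (conjD U f * conjD W g)).re
      = ∑ k, ∑ j, f k * g j * Complex.normSq ((star U * W) k j) := by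
  have hW : star W * W = 1 := mul_eq_one_comm.mp hW'
  rw [conjD, conjD, trace_formula U W hU hW' f g, Complex.ofReal_re]

lemma trace_conjD_same (hW : star W * W = 1) (hW' : W * star W = 1) (f g : n → ℝ) :
    (trace (conjD W f * conjD W g)).re = ∑ j, f j * g j := by
  rw [trace_conjD hW hW' f g, hW]
  refine Finset.sum_congr rfl fun j _ => ?_
  rw [Finset.sum_eq_single j]
  · simp [Matrix.one_apply]
  · intro j' _ hj'
    simp [Matrix.one_apply, Ne.symm hj']
  · intro h; exact absurd (Finset.mem_univ j) h

end Helpers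

open scoped MatrixOrder in
lemma core {d : ℕ} {v : ℕ} {ρ P : Matrix (Fin d) (Fin d) ℂ} (hv : 1 ≤ v)
    (hρ : ρ.PosSemidef) (hP : P.PosSemidef) (hρ1 : trace ρ = 1)
    (hle : ((((v : ℕ) : ℝ) : ℂ) • P - ρ).PosSemidef) :
    (trace (ρ * mlog ρ)).re ≤ (trace (ρ * mlog P)).re + Real.log v := by
  set U : Matrix (Fin d) (Fin d) ℂ := (hρ.1.eigenvectorUnitary : Matrix (Fin d) (Fin d) ℂ) with hUdef
  set W : Matrix (Fin d) (Fin d) ℂ := (hP.1.eigenvectorUnitary : Matrix (Fin d) (Fin d) ℂ) with hWdef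
  have hU : star U * U = 1 := Unitary.coe_star_mul_self hρ.1.eigenvectorUnitary
  have hU' : U * star U = 1 := Unitary.coe_mul_star_self hρ.1.eigenvectorUnitary
  have hW : star W * W = 1 := Unitary.coe_star_mul_self hP.1.eigenvectorUnitary
  have hW' : W * star W = 1 := Unitary.coe_mul_star_self hP.1.eigenvectorUnitary
  set a : Fin d → ℝ := hρ.1.eigenvalues with hadef
  set b : Fin d → ℝ := hP.1.eigenvalues with hbdef
  set c : Fin d → Fin d → ℝ := fun k j => Complex.normSq ((star U * W) k j) with hcdef
  -- spectral representations
  have hρ_eq : ρ = conjD U a := by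
    conv_lhs => rw [hρ.1.spectral_theorem]
    rfl
  have hP_eq : P = conjD W b := by
    conv_lhs => rw [hP.1.spectral_theorem]
    rfl
  have hmlogρ : mlog ρ = conjD U (fun k => Real.log (a k)) := by
    rw [mlog, hρ.1.cfc_eq, Matrix.IsHermitian.cfc]; rfl
  have hmlogP : mlog P = conjD W (fun j => Real.log (b j)) := by
    rw [mlog, hP.1.cfc_eq, Matrix.IsHermitian.cfc]; rfl
  -- basic positivity facts
  have ha : ∀ k, 0 ≤ a k := hρ.eigenvalues_nonneg
  have hb : ∀ j, 0 ≤ b j := hP.eigenvalues_nonneg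
  have hc : ∀ k j, 0 ≤ c k j := fun k j => Complex.normSq_nonneg _
  have hre : ∀ (r : ℝ) (z : ℂ), ((r:ℂ) * z).re = r * z.re := fun r z => by
    simp [Complex.mul_re]
  have hsa : ∑ k, a k = 1 := by
    have h1 : (trace (conjD U a * conjD U (fun _ => 1))).re = ∑ k, a k * 1 :=
      trace_conjD_same hU hU' a _
    rw [conjD_one hU', Matrix.mul_one, ← hρ_eq, hρ1] at h1
    simpa using h1.symm
  have hrow : ∀ k, ∑ j, c k j = 1 := by
    intro k
    have h1 : (trace (conjD U (fun k' => if k' = k then 1 else 0) * conjD W (fun _ => 1))).re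
        = ∑ k', ∑ j, (if k' = k then (1:ℝ) else 0) * 1 * c k' j := trace_conjD hU hW' _ _
    have h2 : (trace (conjD U (fun k' => if k' = k then 1 else 0) * conjD U (fun _ => 1))).re
        = ∑ k', (if k' = k then (1:ℝ) else 0) * 1 := trace_conjD_same hU hU' _ _
    rw [conjD_one hW', Matrix.mul_one] at h1
    rw [conjD_one hU', Matrix.mul_one] at h2
    rw [h1] at h2
    simpa using h2
  -- r_j ≤ v * b_j and consequences
  have key0 : ∀ j, (∑ k, a k * c k j) ≤ (v:ℝ) * b j := by
    intro j
    have hepos : ∀ j', 0 ≤ (fun j' => if j' = j then (1:ℝ) else 0) j' := by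
      intro j'; dsimp only; split <;> norm_num
    have hXpsd : (conjD W (fun j' => if j' = j then 1 else 0)).PosSemidef := conjD_psd hW' hepos
    have h0 : 0 ≤ (trace (((((v:ℕ):ℝ):ℂ) • P - ρ) * (conjD W (fun j' => if j' = j then 1 else 0)))).re :=
      psd_mul_trace_nonneg hle hXpsd
    have hPX : (trace (P * conjD W (fun j' => if j' = j then 1 else 0))).re = b j := by
      rw [hP_eq, trace_conjD_same hW hW']
      simp
    have hρX : (trace (ρ * conjD W (fun j' => if j' = j then 1 else 0))).re = ∑ k, a k * c k j := by
      rw [hρ_eq, trace_conjD hU hW']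
      refine Finset.sum_congr rfl fun k _ => ?_
      rw [Finset.sum_eq_single j] <;> simp +contextual [hcdef]
    rw [Matrix.sub_mul, Matrix.trace_sub, Matrix.smul_mul, Matrix.trace_smul, smul_eq_mul,
      Complex.sub_re, hre, hPX, hρX] at h0
    linarith
  have hbz : ∀ j, b j = 0 → ∀ k, a k * c k j = 0 := by
    intro j hj k
    have h1 : (∑ k, a k * c k j) ≤ 0 := by
      have := key0 j; rw [hj] at this; simpa using this
    have h2 : ∀ k ∈ Finset.univ, 0 ≤ a k * c k j := fun k _ => mul_nonneg (ha k) (hc k j)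
    exact (Finset.sum_eq_zero_iff_of_nonneg h2).mp
      (le_antisymm h1 (Finset.sum_nonneg h2)) k (Finset.mem_univ k)
  -- the regularized inverse
  set β : Fin d → ℝ := fun j => (v:ℝ) * b j + (if b j = 0 then 1 else 0) with hβdef
  have hβpos : ∀ j, 0 < β j := by
    intro j
    rw [hβdef]
    dsimp only
    rcases eq_or_ne (b j) 0 with h | h
    · rw [h, if_pos rfl]; norm_num
    · rw [if_neg h]
      have hbj : 0 < b j := lt_of_le_of_ne (hb j) (Ne.symm h)
      have hv' : (0:ℝ) < v := by exact_mod_cast Nat.lt_of_lt_of_le Nat.zero_lt_one hv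
      nlinarith
  set δ : Fin d → ℝ := fun j => (Real.sqrt (β j))⁻¹ with hδdef
  have hδnonneg : ∀ j, 0 ≤ δ j := fun j => inv_nonneg.mpr (Real.sqrt_nonneg _)
  have hδδ : ∀ j, δ j * δ j = (β j)⁻¹ := by
    intro j
    rw [hδdef]
    dsimp only
    rw [← mul_inv, Real.mul_self_sqrt (le_of_lt (hβpos j))]
  have hδβδ : ∀ j, δ j * β j * δ j = 1 := by
    intro j
    have h1 : δ j * β j * δ j = (β j)⁻¹ * β j := by rw [← hδδ j]; ring
    rw [h1, inv_mul_cancel₀ (ne_of_gt (hβpos j))]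
  set N : Matrix (Fin d) (Fin d) ℂ := conjD W δ with hNdef
  set B : Matrix (Fin d) (Fin d) ℂ := conjD W β with hBdef
  have hNpsd : N.PosSemidef := conjD_psd hW' hδnonneg
  have hBpsd : B.PosSemidef := conjD_psd hW' (fun j => le_of_lt (hβpos j))
  have hNBN : N * B * N = 1 := by
    rw [hNdef, hBdef, conjD_mul hW, conjD_mul hW]
    rw [show (fun j => (fun j => δ j * β j) j * δ j) = fun _ => (1:ℝ) by
      funext j; exact hδβδ j]
    exact conjD_one hW'
  -- B - ρ is psd
  have hBρ : (B - ρ).PosSemidef := by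
    have h1 : B - (((v:ℕ):ℝ):ℂ) • P = conjD W (fun j => if b j = 0 then 1 else 0) := by
      rw [hBdef, hP_eq, conjD_smul, conjD_sub]
      congr 1
      funext j
      rw [hβdef]
      ring
    have h2 : (conjD W (fun j => if b j = 0 then 1 else 0)).PosSemidef := by
      refine conjD_psd hW' fun j => ?_
      split <;> norm_num
    have h3 : B - ρ = (B - (((v:ℕ):ℝ):ℂ) • P) + ((((v:ℕ):ℝ):ℂ) • P - ρ) := by abel
    rw [h3, h1]
    exact h2.add hle
  -- M := N * ρ * N
  set M : Matrix (Fin d) (Fin d) ℂ := N * ρ * N with hMdef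
  have hMpsd : M.PosSemidef := by
    have := hρ.mul_mul_conjTranspose_same N
    rwa [hNpsd.1] at this
  have h1M : (1 - M).PosSemidef := by
    have hNB : 1 - M = N * (B - ρ) * N := by
      rw [hMdef, ← hNBN]
      noncomm_ring
    rw [hNB]
    have := hBρ.mul_mul_conjTranspose_same N
    rwa [hNpsd.1] at this
  have hMM : (M - M * M).PosSemidef := by
    set s' : Matrix (Fin d) (Fin d) ℂ := CFC.sqrt M with hs'def
    have hss : s' * s' = M := CFC.sqrt_mul_sqrt_self M hMpsd.nonneg
    have hmid : s' * M * s' = M * M := by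
      rw [← hss]
      noncomm_ring
    have hId : M - M * M = s' * (1 - M) * s' := by
      rw [Matrix.mul_sub, Matrix.mul_one, Matrix.sub_mul, hss, hmid]
    rw [hId]
    have := h1M.mul_mul_conjTranspose_same s'
    rwa [(CFC.sqrt_nonneg M).posSemidef.1] at this
  -- trace identities
  have tMB : trace (M * B) = trace ρ := by
    rw [hMdef, show N * ρ * N * B = N * (ρ * (N * B)) by noncomm_ring, Matrix.trace_mul_comm,
      show ρ * (N * B) * N = ρ * (N * B * N) by noncomm_ring, hNBN, Matrix.mul_one]
  have tMMB : trace (M * M * B) = trace (ρ * ρ * (N * N)) := by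
    rw [hMdef, show N * ρ * N * (N * ρ * N) * B = N * (ρ * (N * N) * ρ * (N * B)) by noncomm_ring,
      Matrix.trace_mul_comm,
      show ρ * (N * N) * ρ * (N * B) * N = ρ * (N * N) * ρ * (N * B * N) by noncomm_ring,
      hNBN, Matrix.mul_one, show ρ * (N * N) * ρ = ρ * (N * N * ρ) by noncomm_ring,
      Matrix.trace_mul_comm, show N * N * ρ * ρ = N * N * (ρ * ρ) by noncomm_ring,
      Matrix.trace_mul_comm]
  have hT : (trace (ρ * ρ * (N * N))).re = ∑ k, ∑ j, (a k * a k) * ((β j)⁻¹) * c k j := by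
    have hρρ : ρ * ρ = conjD U (fun k => a k * a k) := by rw [hρ_eq, conjD_mul hU]
    have hNN : N * N = conjD W (fun j => (β j)⁻¹) := by
      rw [hNdef, conjD_mul hW, show (fun j => δ j * δ j) = (fun j => (β j)⁻¹) from funext hδδ]
    rw [hρρ, hNN, trace_conjD hU hW']
  have hTsum : ∑ k, ∑ j, (a k * a k) * ((β j)⁻¹) * c k j ≤ 1 := by
    have h0 : 0 ≤ (trace ((M - M * M) * B)).re := psd_mul_trace_nonneg hMM hBpsd
    rw [Matrix.sub_mul, Matrix.trace_sub, Complex.sub_re] at h0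
    have h1 : (trace (M * B)).re = 1 := by rw [tMB, hρ1, Complex.one_re]
    rw [h1, tMMB, hT] at h0
    linarith
  -- final computation
  have TL : (trace (ρ * mlog ρ)).re = ∑ k, a k * Real.log (a k) := by
    rw [hmlogρ, hρ_eq, trace_conjD_same hU hU']
  have TR : (trace (ρ * mlog P)).re = ∑ k, ∑ j, a k * Real.log (b j) * c k j := by
    rw [hmlogP, hρ_eq, trace_conjD hU hW']
  rw [TL, TR]
  have hv' : (0:ℝ) < v := by exact_mod_cast Nat.lt_of_lt_of_le Nat.zero_lt_one hv
  have perterm : ∀ k j, a k * Real.log (a k) * c k j - a k * Real.log (b j) * c k j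
      ≤ a k * c k j * Real.log v + (a k * a k) * (β j)⁻¹ * c k j - a k * c k j := by
    intro k j
    rcases eq_or_ne (a k * c k j) 0 with h | h
    · rcases mul_eq_zero.mp h with h0 | h0 <;> simp [h0]
    · obtain ⟨ha0, hc0⟩ := mul_ne_zero_iff.mp h
      have hak : 0 < a k := lt_of_le_of_ne (ha k) (Ne.symm ha0)
      have hbj : 0 < b j := by
        rcases eq_or_ne (b j) 0 with h0 | h0
        · exact absurd (hbz j h0 k) h
        · exact lt_of_le_of_ne (hb j) (Ne.symm h0)
      have hβj : β j = (v:ℝ) * b j := by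
        rw [hβdef]
        dsimp only
        rw [if_neg (ne_of_gt hbj)]
        ring
      have hvb : 0 < (v:ℝ) * b j := mul_pos hv' hbj
      have base : Real.log (a k) - Real.log (b j) ≤ Real.log v + a k * ((v:ℝ) * b j)⁻¹ - 1 := by
        have h1 := Real.log_le_sub_one_of_pos (div_pos hak hvb)
        rw [Real.log_div (ne_of_gt hak) (ne_of_gt hvb),
          Real.log_mul (ne_of_gt hv') (ne_of_gt hbj), div_eq_mul_inv] at h1
        linarith
      have hacpos : 0 < a k * c k j := lt_of_le_of_ne (mul_nonneg (ha k) (hc k j)) (Ne.symm h)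
      have hmul := mul_le_mul_of_nonneg_left base (le_of_lt hacpos)
      rw [hβj]
      nlinarith [hmul]
  have main := Finset.sum_le_sum (fun k (_ : k ∈ (Finset.univ : Finset (Fin d))) =>
    Finset.sum_le_sum (fun j (_ : j ∈ (Finset.univ : Finset (Fin d))) => perterm k j))
  have e3 : ∑ k, ∑ j, a k * c k j = 1 := by
    rw [show ∑ k, ∑ j, a k * c k j = ∑ k, a k from
      Finset.sum_congr rfl fun k _ => by rw [← Finset.mul_sum, hrow k, mul_one], hsa]
  have e1 : ∑ k, ∑ j, (a k * Real.log (a k) * c k j - a k * Real.log (b j) * c k j)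
      = (∑ k, a k * Real.log (a k)) - ∑ k, ∑ j, a k * Real.log (b j) * c k j := by
    simp only [Finset.sum_sub_distrib]
    congr 1
    refine Finset.sum_congr rfl fun k _ => ?_
    rw [show (fun j => a k * Real.log (a k) * c k j) = fun j => a k * Real.log (a k) * c k j from rfl]
    rw [← Finset.mul_sum, hrow k, mul_one]
  have e2 : ∑ k, ∑ j, (a k * c k j * Real.log v + (a k * a k) * (β j)⁻¹ * c k j - a k * c k j)
      = (∑ k, ∑ j, a k * c k j) * Real.log v
        + (∑ k, ∑ j, (a k * a k) * (β j)⁻¹ * c k j) - (∑ k, ∑ j, a k * c k j) := by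
    simp only [Finset.sum_sub_distrib, Finset.sum_add_distrib, Finset.sum_mul]
  rw [e1, e2, e3] at main
  have hlogv : 0 ≤ Real.log v := Real.log_nonneg (by exact_mod_cast hv)
  linarith [main, hTsum]

/-- For a density matrix ρ and an invertible density matrix σ with `v` distinct eigenvalues
(spectral projections `E i`), the relative entropy satisfies
`D(ρ‖σ) ≤ D(E_σ(ρ)‖σ) + log v` where `E_σ(ρ) = ∑ i, E i * ρ * E i` is the pinching map. -/
theorem relEntropy_le_pinched_add_log {d v : ℕ} (ρ σ : Matrix (Fin d) (Fin d) ℂ)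
    (s : Fin v → ℝ) (E : Fin v → Matrix (Fin d) (Fin d) ℂ)
    (hρ : ρ.PosSemidef) (hρ1 : Matrix.trace ρ = 1)
    (hσ : σ.PosDef) (hσ1 : Matrix.trace σ = 1)
    (hEh : ∀ i, (E i).IsHermitian)
    (hEidem : ∀ i, E i * E i = E i)
    (hEorth : ∀ i j, i ≠ j → E i * E j = 0)
    (hEsum : ∑ i, E i = 1)
    (hs : Function.Injective s)
    (hspec : σ = ∑ i, (s i : ℂ) • E i) :
    (Matrix.trace (ρ * (mlog ρ - mlog σ))).re
      ≤ (Matrix.trace ((∑ i, E i * ρ * E i) *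
          (mlog (∑ i, E i * ρ * E i) - mlog σ))).re + Real.log v := by
  -- v ≥ 1
  have hv : 1 ≤ v := by
    by_contra hv0
    have hv0' : v = 0 := by omega
    subst hv0'
    rw [Finset.univ_eq_empty, Finset.sum_empty] at hEsum
    have hρ0 : ρ = 0 := by rw [← Matrix.mul_one ρ, ← hEsum, Matrix.mul_zero]
    rw [hρ0, Matrix.trace_zero] at hρ1
    exact zero_ne_one hρ1
  set P : Matrix (Fin d) (Fin d) ℂ := ∑ i, E i * ρ * E i with hPdef
  have hPpsd : P.PosSemidef := by
    refine psd_sum Finset.univ _ fun i _ => ?_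
    have := hρ.mul_mul_conjTranspose_same (E i)
    rwa [hEh i] at this
  -- pinching inequality
  have hle : ((((v : ℕ) : ℝ) : ℂ) • P - ρ).PosSemidef := by
    have expand : ∑ i, ∑ j, (E i - E j) * ρ * (E i - E j)
        = (2 : ℂ) • (((v : ℕ) : ℂ) • P - ρ) := by
      have h1 : ∀ i j : Fin v, (E i - E j) * ρ * (E i - E j)
          = E i * ρ * E i + E j * ρ * E j - E i * ρ * E j - E j * ρ * E i := by
        intro i j; noncomm_ring
      rw [Finset.sum_congr rfl fun i _ => Finset.sum_congr rfl fun j _ => h1 i j]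
      have hS1 : ∑ _i : Fin v, ∑ _j : Fin v, 0 = 0 := by simp
      have hS3 : ∑ i : Fin v, ∑ j : Fin v, E i * ρ * E j = ρ := by
        have : ∀ i : Fin v, ∑ j : Fin v, E i * ρ * E j = E i * ρ := by
          intro i
          rw [← Finset.mul_sum, hEsum, Matrix.mul_one]
        rw [Finset.sum_congr rfl fun i _ => this i, ← Finset.sum_mul, hEsum, Matrix.one_mul]
      have hS4 : ∑ i : Fin v, ∑ j : Fin v, E j * ρ * E i = ρ := by
        rw [Finset.sum_comm]
        exact hS3
      have hS1' : ∑ i : Fin v, ∑ _j : Fin v, E i * ρ * E i = ((v : ℕ) : ℂ) • P := by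
        rw [Finset.sum_congr rfl fun i (_ : i ∈ Finset.univ) =>
          (Finset.sum_const (E i * ρ * E i)).trans (by rw [Finset.card_univ, Fintype.card_fin]),
          ← Finset.smul_sum, ← hPdef, Nat.cast_smul_eq_nsmul]
      have hS2' : ∑ _i : Fin v, ∑ j : Fin v, E j * ρ * E j = ((v : ℕ) : ℂ) • P := by
        rw [Finset.sum_const, Finset.card_univ, Fintype.card_fin, ← hPdef,
          Nat.cast_smul_eq_nsmul]
      simp only [Finset.sum_sub_distrib, Finset.sum_add_distrib]
      rw [hS1', hS2', hS3, hS4]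
      rw [two_smul]
      module
    have hpsd2 : (∑ i, ∑ j, (E i - E j) * ρ * (E i - E j)).PosSemidef := by
      refine psd_sum Finset.univ _ fun i _ => psd_sum Finset.univ _ fun j _ => ?_
      have := hρ.mul_mul_conjTranspose_same (E i - E j)
      rwa [Matrix.conjTranspose_sub, hEh i, hEh j] at this
    have hhalf : (((1/2 : ℝ) : ℂ)) • (∑ i, ∑ j, (E i - E j) * ρ * (E i - E j))
        = (((v : ℕ) : ℝ) : ℂ) • P - ρ := by
      rw [expand, smul_smul]
      push_cast
      norm_num
    rw [← hhalf]
    exact psd_smul hpsd2 (by norm_num)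
  -- commutation facts
  have hcommσ : ∀ i, Commute σ (E i) := by
    intro i
    unfold Commute SemiconjBy
    conv_lhs => rw [hspec]
    conv_rhs => rw [hspec]
    rw [Finset.sum_mul, Finset.mul_sum]
    refine Finset.sum_congr rfl fun j _ => ?_
    rw [smul_mul_assoc, mul_smul_comm]
    congr 1
    rcases eq_or_ne j i with h | h
    · subst h; rfl
    · rw [hEorth j i h, hEorth i j (Ne.symm h)]
  have hcommP : ∀ i, Commute P (E i) := by
    intro i
    unfold Commute SemiconjBy
    rw [hPdef, Finset.sum_mul, Finset.mul_sum]
    refine Finset.sum_congr rfl fun j _ => ?_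
    rcases eq_or_ne j i with h | h
    · subst h
      rw [show E j * ρ * E j * E j = E j * ρ * (E j * E j) by noncomm_ring, hEidem j,
        show E j * (E j * ρ * E j) = E j * E j * (ρ * E j) by noncomm_ring, hEidem j]
      noncomm_ring
    · rw [show E j * ρ * E j * E i = E j * ρ * (E j * E i) by noncomm_ring, hEorth j i h,
        show E i * (E j * ρ * E j) = E i * E j * (ρ * E j) by noncomm_ring,
        hEorth i j (Ne.symm h), Matrix.mul_zero, Matrix.zero_mul]
  -- pinched trace identity
  have pinchtr : ∀ X : Matrix (Fin d) (Fin d) ℂ, (∀ i, E i * X = X * E i) →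
      trace (P * X) = trace (ρ * X) := by
    intro X hX
    rw [hPdef, Finset.sum_mul, Matrix.trace_sum]
    have h2 : ∀ i, trace (E i * ρ * E i * X) = trace (E i * (ρ * X)) := by
      intro i
      rw [show E i * ρ * E i * X = E i * ρ * (E i * X) by noncomm_ring, hX i,
        show E i * ρ * (X * E i) = (E i * ρ * X) * E i by noncomm_ring,
        Matrix.trace_mul_comm,
        show E i * (E i * ρ * X) = (E i * E i) * (ρ * X) by noncomm_ring, hEidem i]
    rw [Finset.sum_congr rfl fun i _ => h2 i, ← Matrix.trace_sum, ← Finset.sum_mul, hEsum,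
      Matrix.one_mul]
  have tA : trace (P * mlog σ) = trace (ρ * mlog σ) := by
    refine pinchtr _ fun i => ?_
    have h := (commute_cfc hσ.1 (hcommσ i) Real.log).symm
    exact h
  have tB : trace (P * mlog P) = trace (ρ * mlog P) := by
    refine pinchtr _ fun i => ?_
    have h := (commute_cfc hPpsd.1 (hcommP i) Real.log).symm
    exact h
  have hcore := core hv hρ hPpsd hρ1 hle
  rw [Matrix.mul_sub, Matrix.mul_sub, Matrix.trace_sub, Matrix.trace_sub, tA, tB,
    Complex.sub_re, Complex.sub_re]
  linarith
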